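/- Let α > 0 and let halt, gen be real numbers with 0 < halt < 1/(e^α + 1) and 1 − e^α·halt ≤ gen ≤ 1 − halt/e^α. Then the Sequence-CLDP length distribution satisfies α-length-indistinguishability: for all natural numbers n, m, ℓ, P(n,ℓ) ≤ exp(α·|n − m|)·P(m,ℓ). -/
import Mathlib


/-- With the asymmetric parameter choice, the Sequence-CLDP length
distribution satisfies α-length-indistinguishability. -/
theorem seq_cldp_length_indistinguishability_asymmetric (α halt gen : ℝ) (hα : 0 < α)
    (hhalt0 : 0 < halt) (hhalt1 : halt < 1 / (Real.exp α + 1))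
    (hgen0 : 1 - Real.exp α * halt ≤ gen) (hgen1 : gen ≤ 1 - halt / Real.exp α)
    (P : ℕ → ℕ → ℝ)
    (hP : ∀ n ℓ, P n ℓ = if ℓ < n then halt * (1 - halt) ^ ℓ
      else (1 - halt) ^ n * (1 - gen) * gen ^ (ℓ - n))
    (n m ℓ : ℕ) :
    P n ℓ ≤ Real.exp (α * |(n : ℝ) - (m : ℝ)|) * P m ℓ := by
  set E := Real.exp α with hEdef
  have hE0 : 0 < E := Real.exp_pos α
  have hE1 : 1 < E := by
    have := Real.add_one_le_exp α
    nlinarith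
  have hEp1 : (0:ℝ) < E + 1 := by linarith
  have hkey : halt * (E + 1) < 1 := by
    rw [lt_div_iff₀ hEp1] at hhalt1; linarith
  have h1halt : 0 < 1 - halt := by nlinarith
  have hq : halt / E * E = halt := div_mul_cancel₀ halt hE0.ne'
  -- the four key inequalities
  have hA : 1 - gen ≤ E * halt := by linarith
  have hB : halt ≤ E * (1 - gen) := by
    have h2 : halt / E ≤ 1 - gen := by linarith
    nlinarith [mul_le_mul_of_nonneg_right h2 hE0.le]
  have hC : gen ≤ E * (1 - halt) := by
    nlinarith [mul_pos (sub_pos.2 hE1) (sub_pos.2 (hkey.trans_le hE1.le)),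
      mul_le_mul_of_nonneg_right hgen1 hE0.le]
  have hD : 1 - halt ≤ E * gen := by
    nlinarith [mul_nonneg (sub_pos.2 hE1).le (sub_pos.2 hkey).le]
  have hgenpos : 0 < gen := by nlinarith
  have h1gen : 0 ≤ 1 - gen := by
    have : 0 < halt / E := div_pos hhalt0 hE0
    linarith
  -- adjacent steps
  have step_up : ∀ n ℓ, P n ℓ ≤ E * P (n+1) ℓ := by
    intro n ℓ
    rw [hP, hP]
    rcases lt_trichotomy ℓ n with h | h | h
    · rw [if_pos h, if_pos (h.trans n.lt_succ_self)]
      nlinarith [mul_nonneg hhalt0.le (pow_nonneg h1halt.le ℓ)]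
    · subst h
      rw [if_neg (lt_irrefl ℓ), if_pos ℓ.lt_succ_self, Nat.sub_self, pow_zero, mul_one]
      nlinarith [mul_le_mul_of_nonneg_left hA (pow_nonneg h1halt.le ℓ)]
    · obtain ⟨k, rfl⟩ : ∃ k, ℓ = n + 1 + k := ⟨ℓ - (n+1), by omega⟩
      rw [if_neg (by omega), if_neg (by omega)]
      have e1 : n + 1 + k - n = k + 1 := by omega
      have e2 : n + 1 + k - (n + 1) = k := by omega
      rw [e1, e2, pow_succ, pow_succ]
      nlinarith [mul_le_mul_of_nonneg_right hC (mul_nonneg (mul_nonneg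
        (pow_nonneg h1halt.le n) h1gen) (pow_nonneg hgenpos.le k))]
  have step_down : ∀ n ℓ, P (n+1) ℓ ≤ E * P n ℓ := by
    intro n ℓ
    rw [hP, hP]
    rcases lt_trichotomy ℓ n with h | h | h
    · rw [if_pos h, if_pos (h.trans n.lt_succ_self)]
      nlinarith [mul_nonneg hhalt0.le (pow_nonneg h1halt.le ℓ)]
    · subst h
      rw [if_neg (lt_irrefl ℓ), if_pos ℓ.lt_succ_self, Nat.sub_self, pow_zero, mul_one]
      nlinarith [mul_le_mul_of_nonneg_left hB (pow_nonneg h1halt.le ℓ)]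
    · obtain ⟨k, rfl⟩ : ∃ k, ℓ = n + 1 + k := ⟨ℓ - (n+1), by omega⟩
      rw [if_neg (by omega), if_neg (by omega)]
      have e1 : n + 1 + k - n = k + 1 := by omega
      have e2 : n + 1 + k - (n + 1) = k := by omega
      rw [e1, e2, pow_succ, pow_succ]
      nlinarith [mul_le_mul_of_nonneg_right hD (mul_nonneg (mul_nonneg
        (pow_nonneg h1halt.le n) h1gen) (pow_nonneg hgenpos.le k))]
  -- chains
  have chain_up : ∀ k n ℓ, P n ℓ ≤ E ^ k * P (n + k) ℓ := by
    intro k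
    induction k with
    | zero => intro n ℓ; simp
    | succ k ih =>
      intro n ℓ
      show P n ℓ ≤ E ^ (k+1) * P (n + k + 1) ℓ
      calc P n ℓ ≤ E ^ k * P (n + k) ℓ := ih n ℓ
        _ ≤ E ^ k * (E * P (n + k + 1) ℓ) :=
            mul_le_mul_of_nonneg_left (step_up (n+k) ℓ) (pow_nonneg hE0.le k)
        _ = E ^ (k+1) * P (n + k + 1) ℓ := by rw [pow_succ]; ring
  have chain_down : ∀ k n ℓ, P (n + k) ℓ ≤ E ^ k * P n ℓ := by
    intro k
    induction k with
    | zero => intro n ℓ; simp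
    | succ k ih =>
      intro n ℓ
      show P (n + k + 1) ℓ ≤ E ^ (k+1) * P n ℓ
      calc P (n + k + 1) ℓ ≤ E * P (n + k) ℓ := step_down (n+k) ℓ
        _ ≤ E * (E ^ k * P n ℓ) := mul_le_mul_of_nonneg_left (ih n ℓ) hE0.le
        _ = E ^ (k+1) * P n ℓ := by rw [pow_succ]; ring
  rcases le_total n m with h | h
  · obtain ⟨k, rfl⟩ : ∃ k, m = n + k := ⟨m - n, by omega⟩
    have habs : |(n : ℝ) - ((n + k : ℕ) : ℝ)| = (k : ℝ) := by
      push_cast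
      rw [show (n : ℝ) - ((n:ℝ) + (k:ℝ)) = -(k:ℝ) by ring, abs_neg,
        abs_of_nonneg (Nat.cast_nonneg k)]
    rw [habs, mul_comm α, Real.exp_nat_mul]
    exact chain_up k n ℓ
  · obtain ⟨k, rfl⟩ : ∃ k, n = m + k := ⟨n - m, by omega⟩
    have habs : |((m + k : ℕ) : ℝ) - (m : ℝ)| = (k : ℝ) := by
      push_cast
      rw [show ((m:ℝ) + (k:ℝ)) - (m : ℝ) = (k:ℝ) by ring,
        abs_of_nonneg (Nat.cast_nonneg k)]
    rw [habs, mul_comm α, Real.exp_nat_mul]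
    exact chain_down k m ℓ
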